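/- Fix integers 2 ≤ r < s and define A = {0} ∪ ⋃_{i,ℓ≥0} r^ℓ · [r^i, r^i + r^{(i+1)/2}] and B = {0} ∪ ⋃_{j,m≥0} s^m · [s^j, s^j + s^{(j+1)/2}] (intervals intersected with ℕ₀). Then: the mass dimensions of A and B exist and equal 1/2; rA ⊆ A and sB ⊆ B; Φ_r(A) = A and Φ_s(B) = B; and the upper mass dimension of A + B is at most 4/5. In particular dim_M(A+B) < min(dim_M A + dim_M B, 1). -/

import Mathlib

open Filter Topology Pointwise

/-- `A = {0} ∪ ⋃_{i,ℓ ≥ 0} r^ℓ · ([r^i, r^i + r^{(i+1)/2}] ∩ ℕ₀)`. -/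
def exSet (r : ℕ) : Set ℕ :=
  {0} ∪ {m : ℕ | ∃ i l n : ℕ, m = r ^ l * n ∧
    (r : ℝ) ^ i ≤ (n : ℝ) ∧ (n : ℝ) ≤ (r : ℝ) ^ i + (r : ℝ) ^ (((i : ℝ) + 1) / 2)}

/-- The upper mass dimension of `A ⊆ ℕ₀`. -/
noncomputable def upperMassDim (A : Set ℕ) : ℝ :=
  limsup (fun N : ℕ => Real.log (({n ∈ A | n < N}).ncard : ℝ) / Real.log N) atTop

namespace Ex19

lemma zero_mem (t : ℕ) : 0 ∈ exSet t := Or.inl rfl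

lemma one_mem (t : ℕ) : 1 ∈ exSet t := by
  refine Or.inr ⟨0, 0, 1, by norm_num, by norm_num, ?_⟩
  push_cast
  nlinarith [Real.rpow_nonneg (by positivity : (0:ℝ) ≤ (t:ℝ)) ((0+1)/2 : ℝ)]

lemma mul_mem (t : ℕ) : ∀ n ∈ exSet t, t * n ∈ exSet t := by
  rintro n (rfl | ⟨i, l, n, rfl, h1, h2⟩)
  · exact Or.inl (by simp)
  · exact Or.inr ⟨i, l + 1, n, by ring, h1, h2⟩

lemma div_mem {t : ℕ} (ht : 2 ≤ t) : ∀ n ∈ exSet t, n / t ∈ exSet t := by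
  have ht0 : 0 < t := by omega
  have ht1 : (1:ℝ) ≤ (t:ℝ) := by exact_mod_cast ht0
  have ht2 : (2:ℝ) ≤ (t:ℝ) := by exact_mod_cast ht
  rintro m (rfl | ⟨i, l, n, rfl, h1, h2⟩)
  · exact Or.inl (by simp)
  · rcases Nat.eq_zero_or_pos l with rfl | hl
    · simp only [pow_zero, one_mul]
      rcases Nat.eq_zero_or_pos i with rfl | hi
      · have hle : (n:ℝ) ≤ 1 + (t:ℝ) := by
          have h3 : (t:ℝ) ^ ((((0:ℕ):ℝ) + 1) / 2) ≤ (t:ℝ) := by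
            have := Real.rpow_le_rpow_of_exponent_le ht1 (by norm_num : ((((0:ℕ):ℝ) + 1) / 2) ≤ 1)
            simpa using this
          simp only [pow_zero] at h2
          linarith
        have hn : n ≤ 2 * t - 1 := by
          have : (n:ℝ) ≤ ((2*t - 1 : ℕ) : ℝ) := by
            push_cast [Nat.cast_sub (by omega : 1 ≤ 2*t)]; linarith
          exact_mod_cast this
        have : n / t ≤ 1 := by
          have : n / t < 2 := (Nat.div_lt_iff_lt_mul ht0).2 (by omega)
          omega
        interval_cases h : n / t
        · exact zero_mem t
        · exact one_mem t
      · refine Or.inr ⟨i - 1, 0, n / t, by ring, ?_, ?_⟩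
        · have : t ^ (i-1) ≤ n / t := by
            rw [Nat.le_div_iff_mul_le ht0]
            calc t ^ (i-1) * t = t ^ i := by
                  rw [← pow_succ]; congr 1; omega
              _ ≤ n := by exact_mod_cast (by push_cast; exact h1 : ((t^i : ℕ):ℝ) ≤ (n:ℝ))
          calc ((t:ℝ) ^ (i-1)) = ((t ^ (i-1) : ℕ) : ℝ) := by push_cast; ring
            _ ≤ ((n / t : ℕ) : ℝ) := by exact_mod_cast this
        · have hcast : ((n / t : ℕ) : ℝ) ≤ (n:ℝ) / t := Nat.cast_div_le
          have ht0' : (0:ℝ) < t := by positivity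
          have key : (n:ℝ) / t ≤ (t:ℝ)^(i-1) + (t:ℝ) ^ (((((i-1 : ℕ)):ℝ) + 1) / 2) := by
            rw [div_le_iff₀ ht0']
            have e1 : (t:ℝ)^(i-1) * t = (t:ℝ)^i := by
              rw [← pow_succ]; congr 1; omega
            have e2 : (t:ℝ) ^ (((((i-1 : ℕ)):ℝ) + 1) / 2) * t ≥ (t:ℝ) ^ (((i:ℝ) + 1) / 2) := by
              have : (t:ℝ) ^ (((((i-1 : ℕ)):ℝ) + 1) / 2) * t
                  = (t:ℝ) ^ ((((((i-1 : ℕ)):ℝ) + 1) / 2) + 1) := by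
                rw [Real.rpow_add (by positivity), Real.rpow_one]
              rw [this]
              apply Real.rpow_le_rpow_of_exponent_le ht1
              have : (1:ℝ) ≤ ((i:ℝ)) := by exact_mod_cast hi
              have : (((i-1 : ℕ)):ℝ) = (i:ℝ) - 1 := by
                push_cast [Nat.cast_sub hi]; ring
              rw [this]; linarith
            nlinarith [h2, e1, e2]
          linarith
    · refine Or.inr ⟨i, l - 1, n, ?_, h1, h2⟩
      have : t ^ l * n = t * (t ^ (l-1) * n) := by
        rw [← mul_assoc, ← pow_succ']; congr 2; omega
      rw [this, Nat.mul_div_cancel_left _ ht0]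

lemma phi_image {t : ℕ} (ht : 2 ≤ t) : (fun n : ℕ => n / t) '' exSet t = exSet t := by
  apply Set.Subset.antisymm
  · rintro _ ⟨n, hn, rfl⟩
    exact div_mem ht n hn
  · intro n hn
    refine ⟨t * n, mul_mem t n hn, ?_⟩
    simp [Nat.mul_div_cancel_left _ (by omega : 0 < t)]



/-- floor of `t^((i+1)/2)` -/
noncomputable def K (t i : ℕ) : ℕ := ⌊(t:ℝ) ^ (((i:ℝ) + 1) / 2)⌋₊

def Q (t l i : ℕ) : Set ℕ :=
  {m : ℕ | ∃ n : ℕ, m = t ^ l * n ∧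
    (t : ℝ) ^ i ≤ (n : ℝ) ∧ (n : ℝ) ≤ (t : ℝ) ^ i + (t : ℝ) ^ (((i : ℝ) + 1) / 2)}

lemma exSet_eq (t : ℕ) : exSet t = {0} ∪ ⋃ l, ⋃ i, Q t l i := by
  ext m
  constructor
  · rintro (rfl | ⟨i, l, n, h⟩)
    · exact Or.inl rfl
    · exact Or.inr (Set.mem_iUnion.2 ⟨l, Set.mem_iUnion.2 ⟨i, n, h⟩⟩)
  · rintro (rfl | hm)
    · exact Or.inl rfl
    · obtain ⟨l, hl⟩ := Set.mem_iUnion.1 hm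
      obtain ⟨i, n, h⟩ := Set.mem_iUnion.1 hl
      exact Or.inr ⟨i, l, n, h⟩

lemma Q_subset_image {t : ℕ} (l i : ℕ) :
    Q t l i ⊆ (fun n => t ^ l * n) '' Set.Icc (t ^ i) (t ^ i + K t i) := by
  rintro m ⟨n, rfl, h1, h2⟩
  refine ⟨n, ⟨?_, ?_⟩, rfl⟩
  · exact_mod_cast (by push_cast; exact h1 : ((t^i : ℕ) : ℝ) ≤ (n:ℝ))
  · have h3 : (n : ℝ) ≤ (t:ℝ) ^ (((i:ℝ) + 1) / 2) + ((t ^ i : ℕ) : ℝ) := by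
      push_cast; linarith
    have := Nat.le_floor h3
    rwa [Nat.floor_add_natCast (Real.rpow_nonneg (by positivity) _), add_comm] at this

lemma Q_finite {t : ℕ} (l i : ℕ) : (Q t l i).Finite :=
  Set.Finite.subset ((Set.finite_Icc _ _).image _) (Q_subset_image l i)

lemma ncard_Icc (a b : ℕ) : (Set.Icc a b).ncard = b + 1 - a := by
  rw [Set.ncard_eq_toFinset_card', Set.toFinset_Icc, Nat.card_Icc]

lemma ncard_Q_le {t : ℕ} (ht : 0 < t) (l i : ℕ) : (Q t l i).ncard ≤ K t i + 1 := by
  refine le_trans (Set.ncard_le_ncard (Q_subset_image l i) ((Set.finite_Icc _ _).image _)) ?_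
  rw [Set.ncard_image_of_injective _ (mul_right_injective₀ (by positivity))]
  rw [ncard_Icc]
  omega

lemma K_le {t : ℕ} (i : ℕ) : (K t i : ℝ) ≤ (t:ℝ) ^ (((i:ℝ) + 1) / 2) :=
  Nat.floor_le (Real.rpow_nonneg (by positivity) _)

lemma rpow_split {t : ℕ} (ht : 0 < t) (i : ℕ) :
    (t:ℝ) ^ (((i:ℝ) + 1) / 2) = (t:ℝ) ^ ((1:ℝ)/2) * (t:ℝ) ^ ((i:ℝ)/2) := by
  rw [← Real.rpow_add (by positivity)]; ring_nf

lemma pow_le_of_mem_Q {t : ℕ} (ht : 0 < t) {m l i : ℕ} (hm : m ∈ Q t l i) :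
    t ^ (l + i) ≤ m := by
  obtain ⟨n, rfl, h1, _⟩ := hm
  have hn : t ^ i ≤ n := by exact_mod_cast (by push_cast; exact h1 : ((t^i : ℕ) : ℝ) ≤ (n:ℝ))
  calc t ^ (l+i) = t^l * t^i := pow_add t l i
    _ ≤ t^l * n := Nat.mul_le_mul_left _ hn

lemma ncard_biUnion_le {ι : Type*} (F : Finset ι) (f : ι → Set ℕ) :
    (⋃ i ∈ F, f i).ncard ≤ ∑ i ∈ F, (f i).ncard := by
  classical
  induction F using Finset.induction with
  | empty => simp
  | insert _ _ h ih =>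
    rw [Finset.set_biUnion_insert, Finset.sum_insert h]
    exact le_trans (Set.ncard_union_le _ _) (by omega)

-- half-power of t^i is at most half-power of N when i ≤ log
lemma halfpow_le {t N i : ℕ} (ht : 2 ≤ t) (hN : 1 ≤ N) (hi : i ≤ Nat.log t N) :
    (t:ℝ) ^ ((i:ℝ)/2) ≤ (N:ℝ) ^ ((1:ℝ)/2) := by
  have h1 : t ^ i ≤ N := le_trans (Nat.pow_le_pow_right (by omega) hi) (Nat.pow_log_le_self t (by omega))
  have h2 : ((t:ℝ) ^ (i:ℝ)) ≤ (N:ℝ) := by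
    rw [Real.rpow_natCast]
    exact_mod_cast h1
  calc (t:ℝ) ^ ((i:ℝ)/2) = ((t:ℝ) ^ (i:ℝ)) ^ ((1:ℝ)/2) := by
        rw [← Real.rpow_mul (by positivity)]; ring_nf
    _ ≤ (N:ℝ) ^ ((1:ℝ)/2) := Real.rpow_le_rpow (by positivity) h2 (by norm_num)

lemma log_ge_one {N : ℕ} (hN : 3 ≤ N) : 1 ≤ Real.log N := by
  rw [Real.le_log_iff_exp_le (by positivity)]
  calc Real.exp 1 ≤ 2.7182818286 := (Real.exp_one_lt_d9).le
    _ ≤ (3:ℝ) := by norm_num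
    _ ≤ (N:ℝ) := by exact_mod_cast hN

lemma natlog_le {t N : ℕ} (ht : 2 ≤ t) (hN : 3 ≤ N) :
    ((Nat.log t N : ℝ) + 1) ≤ 3 * Real.log N := by
  have h1 : Nat.log t N ≤ Nat.log 2 N := Nat.log_anti_left (by norm_num) ht
  have h2 : (Nat.log 2 N : ℝ) ≤ Real.logb 2 N := Real.natLog_le_logb N 2
  have h3 : Real.logb 2 N ≤ 2 * Real.log N := by
    rw [Real.logb, div_le_iff₀ (by positivity)]
    nlinarith [Real.log_two_gt_d9, log_ge_one hN, Real.log_nonneg (by exact_mod_cast le_trans (by norm_num) hN : (1:ℝ) ≤ (N:ℝ))]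
  have h4 := log_ge_one hN
  have : (Nat.log t N : ℝ) ≤ (Nat.log 2 N : ℝ) := by exact_mod_cast h1
  linarith

lemma count_upper {t N : ℕ} (ht : 2 ≤ t) (hN : 3 ≤ N) :
    (({n ∈ exSet t | n < N}).ncard : ℝ) ≤
      19 * (t:ℝ) ^ ((1:ℝ)/2) * (Real.log N) ^ 2 * (N:ℝ) ^ ((1:ℝ)/2) := by
  classical
  set L := Nat.log t N with hL
  set F : Finset (ℕ × ℕ) := Finset.range (L+1) ×ˢ Finset.range (L+1) with hF
  have cover : {n ∈ exSet t | n < N} ⊆ {0} ∪ ⋃ p ∈ F, Q t p.1 p.2 := by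
    rintro m ⟨hm, hmN⟩
    rw [exSet_eq] at hm
    rcases hm with rfl | hm
    · exact Or.inl rfl
    · obtain ⟨l, hl⟩ := Set.mem_iUnion.1 hm
      obtain ⟨i, hq⟩ := Set.mem_iUnion.1 hl
      have h1 : t ^ (l+i) ≤ N := le_trans (pow_le_of_mem_Q (by omega) hq) (by omega)
      have h2 : l + i ≤ L := by
        rw [hL, Nat.le_log_iff_pow_le (by omega) (by omega)]
        exact h1
      refine Or.inr (Set.mem_biUnion (?_ : (l, i) ∈ F) hq)
      simp only [hF, Finset.mem_product, Finset.mem_range]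
      omega
  have hfin : ({0} ∪ ⋃ p ∈ F, Q t p.1 p.2 : Set ℕ).Finite := by
    refine (Set.finite_singleton 0).union (Set.Finite.biUnion F.finite_toSet ?_)
    intro p _; exact Q_finite p.1 p.2
  have step1 : ({n ∈ exSet t | n < N}).ncard ≤ 1 + ∑ p ∈ F, (Q t p.1 p.2).ncard := by
    refine le_trans (Set.ncard_le_ncard cover hfin) ?_
    refine le_trans (Set.ncard_union_le _ _) ?_
    have := ncard_biUnion_le F (fun p => Q t p.1 p.2)
    simp only [Set.ncard_singleton]
    omega
  -- each term ≤ 2 * t^(1/2) * N^(1/2), real bound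
  have hterm : ∀ p ∈ F, ((Q t p.1 p.2).ncard : ℝ) ≤ 2 * (t:ℝ)^((1:ℝ)/2) * (N:ℝ)^((1:ℝ)/2) := by
    rintro ⟨l, i⟩ hp
    simp only [hF, Finset.mem_product, Finset.mem_range] at hp
    have h1 : ((Q t l i).ncard : ℝ) ≤ (K t i : ℝ) + 1 := by
      exact_mod_cast ncard_Q_le (by omega) l i
    have h2 : (K t i : ℝ) ≤ (t:ℝ)^((1:ℝ)/2) * (N:ℝ)^((1:ℝ)/2) := by
      refine le_trans (K_le i) ?_
      rw [rpow_split (by omega)]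
      have := halfpow_le ht (by omega) (by omega : i ≤ Nat.log t N)
      have h0 : (1:ℝ) ≤ (t:ℝ)^((1:ℝ)/2) := Real.one_le_rpow (by exact_mod_cast (by omega : 1 ≤ t)) (by norm_num)
      nlinarith [Real.rpow_nonneg (by positivity : (0:ℝ) ≤ (t:ℝ)) ((i:ℝ)/2)]
    have h3 : (1:ℝ) ≤ (t:ℝ)^((1:ℝ)/2) * (N:ℝ)^((1:ℝ)/2) := by
      have h0 : (1:ℝ) ≤ (t:ℝ)^((1:ℝ)/2) := Real.one_le_rpow (by exact_mod_cast (by omega : 1 ≤ t)) (by norm_num)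
      have h0' : (1:ℝ) ≤ (N:ℝ)^((1:ℝ)/2) := Real.one_le_rpow (by exact_mod_cast (by omega : 1 ≤ N)) (by norm_num)
      nlinarith
    linarith
  have step2 : ((∑ p ∈ F, (Q t p.1 p.2).ncard : ℕ) : ℝ) ≤
      ((L:ℝ)+1)^2 * (2 * (t:ℝ)^((1:ℝ)/2) * (N:ℝ)^((1:ℝ)/2)) := by
    push_cast
    refine le_trans (Finset.sum_le_sum hterm) ?_
    rw [Finset.sum_const, hF, Finset.card_product, Finset.card_range]
    push_cast
    rw [nsmul_eq_mul]
    push_cast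
    nlinarith [Real.rpow_nonneg (by positivity : (0:ℝ) ≤ (t:ℝ)) ((1:ℝ)/2),
      Real.rpow_nonneg (by positivity : (0:ℝ) ≤ (N:ℝ)) ((1:ℝ)/2)]
  have hlog := natlog_le ht hN
  have h0 : (1:ℝ) ≤ (t:ℝ)^((1:ℝ)/2) := Real.one_le_rpow (by exact_mod_cast (by omega : 1 ≤ t)) (by norm_num)
  have h0' : (1:ℝ) ≤ (N:ℝ)^((1:ℝ)/2) := Real.one_le_rpow (by exact_mod_cast (by omega : 1 ≤ N)) (by norm_num)
  have h4 := log_ge_one hN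
  have hstep1' : (({n ∈ exSet t | n < N}).ncard : ℝ) ≤ 1 + ((∑ p ∈ F, (Q t p.1 p.2).ncard : ℕ) : ℝ) := by
    exact_mod_cast step1
  have hLnn : (0:ℝ) ≤ (L:ℝ) := by positivity
  have hX : (1:ℝ) ≤ (t:ℝ)^((1:ℝ)/2) * (Real.log N)^2 * (N:ℝ)^((1:ℝ)/2) := by
    have hlog2 : (1:ℝ) ≤ (Real.log N)^2 := by nlinarith
    have h7 : (1:ℝ) ≤ (t:ℝ)^((1:ℝ)/2) * (Real.log N)^2 := by nlinarith
    nlinarith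
  have h5 : ((L:ℝ)+1)^2 * (2 * (t:ℝ)^((1:ℝ)/2) * (N:ℝ)^((1:ℝ)/2)) ≤
      (3*Real.log N)^2 * (2 * (t:ℝ)^((1:ℝ)/2) * (N:ℝ)^((1:ℝ)/2)) :=
    mul_le_mul_of_nonneg_right (pow_le_pow_left₀ (by positivity) hlog 2) (by positivity)
  have h6 : (3*Real.log N)^2 * (2 * (t:ℝ)^((1:ℝ)/2) * (N:ℝ)^((1:ℝ)/2)) =
      18 * ((t:ℝ)^((1:ℝ)/2) * (Real.log N)^2 * (N:ℝ)^((1:ℝ)/2)) := by ring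
  linarith
lemma count_lower {t N : ℕ} (ht : 2 ≤ t) (hN : 4 * t^2 ≤ N) :
    (N:ℝ) ^ ((1:ℝ)/2) / (2 * (t:ℝ)^((1:ℝ)/2)) ≤ (({n ∈ exSet t | n < N}).ncard : ℝ) := by
  have hN0 : 0 < N := by nlinarith
  have ht1 : (1:ℝ) < (t:ℝ) := by exact_mod_cast (by omega : 1 < t)
  have ht2 : (2:ℝ) ≤ (t:ℝ) := by exact_mod_cast ht
  set L := Nat.log t N with hL
  have hL2 : 2 ≤ L := by
    rw [hL, Nat.le_log_iff_pow_le (by omega) (by omega)]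
    nlinarith
  set i := L - 1 with hi
  have hiL : i + 1 = L := by omega
  have hi1 : 1 ≤ i := by omega
  -- the key real quantities
  have hKcast : ((i:ℝ) + 1) = (L:ℝ) := by exact_mod_cast congrArg (Nat.cast : ℕ → ℝ) hiL
  have hK1 : 1 ≤ K t i := by
    have : (1:ℝ) ≤ (t:ℝ) ^ (((i:ℝ)+1)/2) := Real.one_le_rpow ht1.le (by positivity)
    exact Nat.le_floor (by exact_mod_cast this)
  -- t^(L/2) ≤ t^i  (since L ≤ 2i i.e. L ≥ 2)
  have hhalf : (t:ℝ) ^ (((i:ℝ)+1)/2) ≤ (t:ℝ)^i := by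
    rw [hKcast, ← Real.rpow_natCast (t:ℝ) i]
    apply Real.rpow_le_rpow_of_exponent_le ht1.le
    have h1 : (L:ℝ) ≤ 2 * (i:ℝ) := by
      have : L ≤ 2 * i := by omega
      exact_mod_cast this
    linarith
  -- t^i + K ≤ N
  have hIccN : t ^ i + K t i ≤ N := by
    have h1 : ((t^i + K t i : ℕ) : ℝ) ≤ ((t^L : ℕ) : ℝ) := by
      push_cast
      have h2 : (K t i : ℝ) ≤ (t:ℝ)^i := le_trans (K_le i) hhalf
      have h3 : (t:ℝ)^i * t = (t:ℝ)^L := by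
        rw [← pow_succ, hiL]
      nlinarith [pow_nonneg (by positivity : (0:ℝ) ≤ (t:ℝ)) i, pow_pos (by positivity : (0:ℝ) < (t:ℝ)) i]
    have h2 : t ^ i + K t i ≤ t ^ L := by exact_mod_cast h1
    exact le_trans h2 (Nat.pow_log_le_self t (by omega))
  -- the interval Icc (t^i) (t^i + K - 1) sits inside the counted set
  have hsub : Set.Icc (t^i) (t^i + (K t i - 1)) ⊆ {n ∈ exSet t | n < N} := by
    rintro n ⟨hn1, hn2⟩
    have hnN : n < N := by omega
    refine ⟨Or.inr ⟨i, 0, n, by ring, ?_, ?_⟩, hnN⟩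
    · calc (t:ℝ)^i = ((t^i : ℕ):ℝ) := by push_cast; ring
        _ ≤ (n:ℝ) := by exact_mod_cast hn1
    · have h1 : (n:ℝ) ≤ ((t^i + (K t i - 1) : ℕ) : ℝ) := by exact_mod_cast hn2
      have h2 : ((t^i + (K t i - 1) : ℕ) : ℝ) ≤ (t:ℝ)^i + (t:ℝ) ^ (((i:ℝ)+1)/2) := by
        have h3 : (K t i : ℝ) ≤ (t:ℝ) ^ (((i:ℝ)+1)/2) := K_le i
        have h4 : ((K t i - 1 : ℕ) : ℝ) = (K t i : ℝ) - 1 := by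
          push_cast [Nat.cast_sub hK1]; ring
        push_cast [h4]
        nlinarith
      linarith
  have hcount : K t i ≤ ({n ∈ exSet t | n < N}).ncard := by
    have h1 := Set.ncard_le_ncard hsub (Set.Finite.subset (Set.finite_Iio N) (by rintro n ⟨_, h⟩; exact h))
    rw [ncard_Icc] at h1
    omega
  -- now K ≥ t^(L/2) - 1 ≥ sqrt(N/t) - 1 ≥ sqrt N/(2 sqrt t)
  have hKreal : (t:ℝ) ^ (((i:ℝ)+1)/2) - 1 ≤ (K t i : ℝ) := by
    have := Nat.lt_floor_add_one ((t:ℝ) ^ (((i:ℝ)+1)/2))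
    have h2 : ((K t i : ℕ):ℝ) = (⌊(t:ℝ) ^ (((i:ℝ)+1)/2)⌋₊ : ℝ) := rfl
    linarith
  have hNt : (N:ℝ) / t ≤ ((t:ℝ)^L : ℝ) := by
    have h1 : N < t ^ (L+1) := by
      rw [hL]; exact Nat.lt_pow_succ_log_self (by omega) N
    have h2 : (N:ℝ) < ((t ^ (L+1) : ℕ) : ℝ) := by exact_mod_cast h1
    rw [div_le_iff₀ (by positivity)]
    rw [pow_succ] at h2
    push_cast at h2 ⊢
    linarith
  have hmain : (N:ℝ)^((1:ℝ)/2) / (t:ℝ)^((1:ℝ)/2) ≤ (t:ℝ) ^ (((i:ℝ)+1)/2) := by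
    rw [hKcast]
    have h1 : (N:ℝ)^((1:ℝ)/2) / (t:ℝ)^((1:ℝ)/2) = ((N:ℝ)/t) ^ ((1:ℝ)/2) := by
      rw [Real.div_rpow (by positivity) (by positivity)]
    rw [h1]
    calc ((N:ℝ)/t) ^ ((1:ℝ)/2) ≤ ((t:ℝ)^L) ^ ((1:ℝ)/2) :=
          Real.rpow_le_rpow (by positivity) hNt (by norm_num)
      _ = (t:ℝ) ^ ((L:ℝ)/2) := by
          rw [← Real.rpow_natCast (t:ℝ) L, ← Real.rpow_mul (by positivity)]; ring_nf
  -- and sqrt N / (2 sqrt t) ≤ sqrt N / sqrt t - 1  since sqrt N ≥ 2 sqrt t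
  have hbig : 2 * (t:ℝ)^((1:ℝ)/2) ≤ (N:ℝ)^((1:ℝ)/2) := by
    have hT2 : ((t:ℝ)^((1:ℝ)/2))^(2:ℕ) = (t:ℝ) := by
      rw [← Real.rpow_natCast ((t:ℝ)^((1:ℝ)/2)) 2, ← Real.rpow_mul (by positivity)]
      norm_num
    have hN2 : ((N:ℝ)^((1:ℝ)/2))^(2:ℕ) = (N:ℝ) := by
      rw [← Real.rpow_natCast ((N:ℝ)^((1:ℝ)/2)) 2, ← Real.rpow_mul (by positivity)]
      norm_num
    have h4t : ((4 * t^2 : ℕ):ℝ) ≤ (N:ℝ) := by exact_mod_cast hN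
    refine (pow_le_pow_iff_left₀ (by positivity) (by positivity) (by norm_num : (2:ℕ) ≠ 0)).1 ?_
    rw [mul_pow, hT2, hN2]
    push_cast at h4t
    nlinarith
  have hts : (0:ℝ) < (t:ℝ)^((1:ℝ)/2) := by positivity
  have hfinal : (N:ℝ)^((1:ℝ)/2) / (2 * (t:ℝ)^((1:ℝ)/2)) ≤ (K t i : ℝ) := by
    have h1 : (N:ℝ)^((1:ℝ)/2) / (2 * (t:ℝ)^((1:ℝ)/2)) ≤ (N:ℝ)^((1:ℝ)/2) / (t:ℝ)^((1:ℝ)/2) - 1 := by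
      rw [div_le_iff₀ (by positivity)]
      have e : ((N:ℝ)^((1:ℝ)/2) / (t:ℝ)^((1:ℝ)/2) - 1) * (2 * (t:ℝ)^((1:ℝ)/2))
          = 2*(N:ℝ)^((1:ℝ)/2) - 2*(t:ℝ)^((1:ℝ)/2) := by
        field_simp
      rw [e]; linarith [hbig, Real.rpow_nonneg (by positivity : (0:ℝ) ≤ (N:ℝ)) ((1:ℝ)/2)]
    linarith
  calc (N:ℝ)^((1:ℝ)/2) / (2 * (t:ℝ)^((1:ℝ)/2)) ≤ (K t i : ℝ) := hfinal
    _ ≤ (({n ∈ exSet t | n < N}).ncard : ℝ) := by exact_mod_cast hcount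
def QN (t l i N : ℕ) : Set ℕ := Q t l i ∩ Set.Iio N

lemma QN_finite (t l i N : ℕ) : (QN t l i N).Finite :=
  (Q_finite l i).subset Set.inter_subset_left

lemma pow_half_le {t c N : ℕ} (h : t ^ c ≤ N) :
    (t:ℝ) ^ ((c:ℝ)/2) ≤ (N:ℝ) ^ ((1:ℝ)/2) := by
  have h2 : ((t:ℝ) ^ (c:ℝ)) ≤ (N:ℝ) := by
    rw [Real.rpow_natCast]; exact_mod_cast h
  calc (t:ℝ) ^ ((c:ℝ)/2) = ((t:ℝ) ^ (c:ℝ)) ^ ((1:ℝ)/2) := by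
        rw [← Real.rpow_mul (by positivity)]; ring_nf
    _ ≤ (N:ℝ) ^ ((1:ℝ)/2) := Real.rpow_le_rpow (by positivity) h2 (by norm_num)

lemma pow_le_of_mem_QN {t m l i N : ℕ} (ht : 0 < t) (hm : m ∈ QN t l i N) :
    t ^ (l + i) ≤ N :=
  le_trans (pow_le_of_mem_Q ht hm.1) (le_of_lt hm.2)

lemma ncard_QN_le {t : ℕ} (ht : 0 < t) (l i N : ℕ) : (QN t l i N).ncard ≤ K t i + 1 :=
  le_trans (Set.ncard_le_ncard Set.inter_subset_left (Q_finite l i)) (ncard_Q_le ht l i)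

/-- real bound for nonempty piece, in terms of `v = t^(i/2)`. -/
lemma ncard_QN_le_v {t : ℕ} (ht : 2 ≤ t) (l i N : ℕ) :
    ((QN t l i N).ncard : ℝ) ≤ 2 * (t:ℝ)^((1:ℝ)/2) * (t:ℝ)^((i:ℝ)/2) := by
  have h1 : ((QN t l i N).ncard : ℝ) ≤ (K t i : ℝ) + 1 := by
    exact_mod_cast ncard_QN_le (by omega) l i N
  have h2 : (K t i : ℝ) ≤ (t:ℝ)^((1:ℝ)/2) * (t:ℝ)^((i:ℝ)/2) := by
    refine le_trans (K_le i) ?_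
    rw [rpow_split (by omega)]
  have h3 : (1:ℝ) ≤ (t:ℝ)^((1:ℝ)/2) * (t:ℝ)^((i:ℝ)/2) := by
    have := Real.one_le_rpow (by exact_mod_cast (by omega : 1 ≤ t) : (1:ℝ) ≤ (t:ℝ)) (by norm_num : (0:ℝ) ≤ 1/2)
    have := Real.one_le_rpow (by exact_mod_cast (by omega : 1 ≤ t) : (1:ℝ) ≤ (t:ℝ)) (by positivity : (0:ℝ) ≤ (i:ℝ)/2)
    nlinarith
  linarith

lemma ncard_QN_le_real {t : ℕ} (ht : 2 ≤ t) (l i N : ℕ) (hN : 1 ≤ N) :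
    ((QN t l i N).ncard : ℝ) ≤ 2 * (t:ℝ)^((1:ℝ)/2) * (N:ℝ)^((1:ℝ)/2) := by
  rcases (QN t l i N).eq_empty_or_nonempty with he | hne
  · rw [he]; simp; positivity
  · obtain ⟨m, hm⟩ := hne
    have h1 : t ^ i ≤ N := by
      have := pow_le_of_mem_QN (by omega) hm
      calc t ^ i ≤ t ^ (l+i) := Nat.pow_le_pow_right (by omega) (by omega)
        _ ≤ N := this
    have h2 : (t:ℝ)^((i:ℝ)/2) ≤ (N:ℝ)^((1:ℝ)/2) := pow_half_le h1
    have h3 := ncard_QN_le_v ht l i N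
    have h4 : (0:ℝ) < (t:ℝ)^((1:ℝ)/2) := by positivity
    nlinarith

lemma ncard_add_le' (X Y : Set ℕ) : (X + Y).ncard ≤ X.ncard * Y.ncard := by
  rw [← Nat.card_coe_set_eq, ← Nat.card_coe_set_eq, ← Nat.card_coe_set_eq]
  exact Set.natCard_add_le

/-- span bound : `QN r l i N + QN s m j N` lies in an interval of length
`r^l * K r i + s^m * K s j`. -/
lemma QN_add_subset_Icc (r s l i m j N : ℕ) :
    QN r l i N + QN s m j N ⊆
      Set.Icc (r^(l+i) + s^(m+j)) (r^(l+i) + s^(m+j) + (r^l * K r i + s^m * K s j)) := by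
  rintro x hx
  rw [Set.mem_add] at hx
  obtain ⟨a, ha, b, hb, rfl⟩ := hx
  obtain ⟨⟨n, rfl, hn1, hn2⟩, -⟩ := ha
  obtain ⟨⟨k, rfl, hk1, hk2⟩, -⟩ := hb
  have hn1' : r ^ i ≤ n := by exact_mod_cast (by push_cast; exact hn1 : ((r^i : ℕ):ℝ) ≤ (n:ℝ))
  have hk1' : s ^ j ≤ k := by exact_mod_cast (by push_cast; exact hk1 : ((s^j : ℕ):ℝ) ≤ (k:ℝ))
  have hn2' : n ≤ r ^ i + K r i := by
    have h3 : (n : ℝ) ≤ (r:ℝ) ^ (((i:ℝ) + 1) / 2) + ((r ^ i : ℕ) : ℝ) := by push_cast; linarith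
    have := Nat.le_floor h3
    rwa [Nat.floor_add_natCast (Real.rpow_nonneg (by positivity) _), add_comm] at this
  have hk2' : k ≤ s ^ j + K s j := by
    have h3 : (k : ℝ) ≤ (s:ℝ) ^ (((j:ℝ) + 1) / 2) + ((s ^ j : ℕ) : ℝ) := by push_cast; linarith
    have := Nat.le_floor h3
    rwa [Nat.floor_add_natCast (Real.rpow_nonneg (by positivity) _), add_comm] at this
  constructor
  · rw [pow_add, pow_add]
    exact Nat.add_le_add (Nat.mul_le_mul_left _ hn1') (Nat.mul_le_mul_left _ hk1')
  · have e1 : r^l * n ≤ r^(l+i) + r^l * K r i := by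
      rw [pow_add]
      calc r^l * n ≤ r^l * (r^i + K r i) := Nat.mul_le_mul_left _ hn2'
        _ = r^l * r^i + r^l * K r i := by ring
    have e2 : s^m * k ≤ s^(m+j) + s^m * K s j := by
      rw [pow_add]
      calc s^m * k ≤ s^m * (s^j + K s j) := Nat.mul_le_mul_left _ hk2'
        _ = s^m * s^j + s^m * K s j := by ring
    omega

set_option maxHeartbeats 1000000 in
/-- key per-pair bound. -/
lemma pair_bound {r s : ℕ} (hr : 2 ≤ r) (hrs : r ≤ s) (l i m j N : ℕ) (hN : 1 ≤ N) :
    ((QN r l i N + QN s m j N).ncard : ℝ) ≤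
      8 * (r:ℝ)^((1:ℝ)/2) * (s:ℝ)^((1:ℝ)/2) * (N:ℝ)^((3:ℝ)/4) := by
  have hs : 2 ≤ s := le_trans hr hrs
  have hr1 : (1:ℝ) ≤ (r:ℝ) := by exact_mod_cast (by omega : 1 ≤ r)
  have hs1 : (1:ℝ) ≤ (s:ℝ) := by exact_mod_cast (by omega : 1 ≤ s)
  have hN1 : (1:ℝ) ≤ (N:ℝ) := by exact_mod_cast hN
  have hrsr : (r:ℝ)^((1:ℝ)/2) ≤ (s:ℝ)^((1:ℝ)/2) :=
    Real.rpow_le_rpow (by positivity) (by exact_mod_cast hrs) (by norm_num)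
  have hRr : (1:ℝ) ≤ (r:ℝ)^((1:ℝ)/2) := Real.one_le_rpow hr1 (by norm_num)
  have hRs : (1:ℝ) ≤ (s:ℝ)^((1:ℝ)/2) := Real.one_le_rpow hs1 (by norm_num)
  have hN34 : (1:ℝ) ≤ (N:ℝ)^((3:ℝ)/4) := Real.one_le_rpow hN1 (by norm_num)
  rcases (QN r l i N).eq_empty_or_nonempty with he | hner
  · rw [he, Set.empty_add]
    simp only [Set.ncard_empty, Nat.cast_zero]
    positivity
  rcases (QN s m j N).eq_empty_or_nonempty with he | hnes
  · rw [he, Set.add_empty]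
    simp only [Set.ncard_empty, Nat.cast_zero]
    positivity
  obtain ⟨a, ha⟩ := hner
  obtain ⟨b, hb⟩ := hnes
  have hrN : r ^ (l+i) ≤ N := pow_le_of_mem_QN (by omega) ha
  have hsN : s ^ (m+j) ≤ N := pow_le_of_mem_QN (by omega) hb
  set u := (r:ℝ)^((l:ℝ)/2) with hu
  set v := (r:ℝ)^((i:ℝ)/2) with hv
  set w := (s:ℝ)^((m:ℝ)/2) with hw
  set z := (s:ℝ)^((j:ℝ)/2) with hz
  have hu1 : (1:ℝ) ≤ u := Real.one_le_rpow hr1 (by positivity)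
  have hv1 : (1:ℝ) ≤ v := Real.one_le_rpow hr1 (by positivity)
  have hw1 : (1:ℝ) ≤ w := Real.one_le_rpow hs1 (by positivity)
  have hz1 : (1:ℝ) ≤ z := Real.one_le_rpow hs1 (by positivity)
  have huv : u * v ≤ (N:ℝ)^((1:ℝ)/2) := by
    rw [hu, hv, ← Real.rpow_add (by positivity)]
    have : (l:ℝ)/2 + (i:ℝ)/2 = ((l + i : ℕ) : ℝ)/2 := by push_cast; ring
    rw [this]
    exact pow_half_le hrN
  have hwz : w * z ≤ (N:ℝ)^((1:ℝ)/2) := by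
    rw [hw, hz, ← Real.rpow_add (by positivity)]
    have : (m:ℝ)/2 + (j:ℝ)/2 = ((m + j : ℕ) : ℝ)/2 := by push_cast; ring
    rw [this]
    exact pow_half_le hsN
  have cardA : ((QN r l i N).ncard : ℝ) ≤ 2 * (r:ℝ)^((1:ℝ)/2) * v := ncard_QN_le_v hr l i N
  have cardB : ((QN s m j N).ncard : ℝ) ≤ 2 * (s:ℝ)^((1:ℝ)/2) * z := ncard_QN_le_v hs m j N
  -- product bound
  have prodbound : ((QN r l i N + QN s m j N).ncard : ℝ) ≤
      4 * (r:ℝ)^((1:ℝ)/2) * (s:ℝ)^((1:ℝ)/2) * (v * z) := by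
    have h1 := ncard_add_le' (QN r l i N) (QN s m j N)
    have h2 : ((QN r l i N + QN s m j N).ncard : ℝ) ≤
        ((QN r l i N).ncard : ℝ) * ((QN s m j N).ncard : ℝ) := by exact_mod_cast h1
    calc ((QN r l i N + QN s m j N).ncard : ℝ)
        ≤ ((QN r l i N).ncard : ℝ) * ((QN s m j N).ncard : ℝ) := h2
      _ ≤ (2 * (r:ℝ)^((1:ℝ)/2) * v) * (2 * (s:ℝ)^((1:ℝ)/2) * z) :=
          mul_le_mul cardA cardB (by positivity) (by positivity)
      _ = 4 * (r:ℝ)^((1:ℝ)/2) * (s:ℝ)^((1:ℝ)/2) * (v * z) := by ring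
  -- span bound
  have spanbound : ((QN r l i N + QN s m j N).ncard : ℝ) ≤
      (r:ℝ)^((1:ℝ)/2) * u * (N:ℝ)^((1:ℝ)/2) + (s:ℝ)^((1:ℝ)/2) * w * (N:ℝ)^((1:ℝ)/2) + 1 := by
    have h1 := Set.ncard_le_ncard (QN_add_subset_Icc r s l i m j N) (Set.finite_Icc _ _)
    rw [ncard_Icc] at h1
    have h2 : ((QN r l i N + QN s m j N).ncard : ℝ) ≤ (r^l * K r i : ℕ) + (s^m * K s j : ℕ) + 1 := by
      have : (QN r l i N + QN s m j N).ncard ≤ r^l * K r i + s^m * K s j + 1 := by omega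
      exact_mod_cast this
    have h3 : ((r^l * K r i : ℕ) : ℝ) ≤ (r:ℝ)^((1:ℝ)/2) * u * (N:ℝ)^((1:ℝ)/2) := by
      have e1 : ((r^l : ℕ) : ℝ) = u * u := by
        rw [hu, ← Real.rpow_add (by positivity)]
        push_cast
        rw [show (l:ℝ)/2 + (l:ℝ)/2 = (l:ℝ) by ring, Real.rpow_natCast]
      have e2 : (K r i : ℝ) ≤ (r:ℝ)^((1:ℝ)/2) * v := by
        refine le_trans (K_le i) ?_; rw [rpow_split (by omega)]
      calc ((r^l * K r i : ℕ) : ℝ) = ((r^l : ℕ) : ℝ) * (K r i : ℝ) := by push_cast; ring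
        _ ≤ (u * u) * ((r:ℝ)^((1:ℝ)/2) * v) := by
            rw [e1]
            exact mul_le_mul_of_nonneg_left e2 (by positivity)
        _ = (r:ℝ)^((1:ℝ)/2) * u * (u * v) := by ring
        _ ≤ (r:ℝ)^((1:ℝ)/2) * u * (N:ℝ)^((1:ℝ)/2) :=
            mul_le_mul_of_nonneg_left huv (by positivity)
    have h4 : ((s^m * K s j : ℕ) : ℝ) ≤ (s:ℝ)^((1:ℝ)/2) * w * (N:ℝ)^((1:ℝ)/2) := by
      have e1 : ((s^m : ℕ) : ℝ) = w * w := by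
        rw [hw, ← Real.rpow_add (by positivity)]
        push_cast
        rw [show (m:ℝ)/2 + (m:ℝ)/2 = (m:ℝ) by ring, Real.rpow_natCast]
      have e2 : (K s j : ℝ) ≤ (s:ℝ)^((1:ℝ)/2) * z := by
        refine le_trans (K_le j) ?_; rw [rpow_split (by omega)]
      calc ((s^m * K s j : ℕ) : ℝ) = ((s^m : ℕ) : ℝ) * (K s j : ℝ) := by push_cast; ring
        _ ≤ (w * w) * ((s:ℝ)^((1:ℝ)/2) * z) := by
            rw [e1]
            exact mul_le_mul_of_nonneg_left e2 (by positivity)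
        _ = (s:ℝ)^((1:ℝ)/2) * w * (w * z) := by ring
        _ ≤ (s:ℝ)^((1:ℝ)/2) * w * (N:ℝ)^((1:ℝ)/2) :=
            mul_le_mul_of_nonneg_left hwz (by positivity)
    linarith
  -- case split on u * w vs N^(1/4)
  have hq : (N:ℝ)^((1:ℝ)/4) * (N:ℝ)^((1:ℝ)/2) = (N:ℝ)^((3:ℝ)/4) := by
    rw [← Real.rpow_add (by positivity)]; norm_num
  have hNpos : (0:ℝ) < (N:ℝ) := by exact_mod_cast (by omega : 0 < N)
  rcases le_or_gt ((N:ℝ)^((1:ℝ)/4)) (u * w) with hcase | hcase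
  · -- product case : v * z ≤ N / (u w) ≤ N^(3/4)
    have huwpos : (0:ℝ) < u * w := by positivity
    have hvz2 : v * z ≤ (N:ℝ)^((3:ℝ)/4) := by
      have h5 : v * z * (u * w) ≤ (N:ℝ)^((3:ℝ)/4) * (u * w) := by
        calc v * z * (u * w) = (u * v) * (w * z) := by ring
          _ ≤ (N:ℝ)^((1:ℝ)/2) * (N:ℝ)^((1:ℝ)/2) :=
              mul_le_mul huv hwz (by positivity) (by positivity)
          _ = (N:ℝ)^((3:ℝ)/4) * (N:ℝ)^((1:ℝ)/4) := by
              rw [← Real.rpow_add hNpos, ← Real.rpow_add hNpos]; norm_num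
          _ ≤ (N:ℝ)^((3:ℝ)/4) * (u * w) := mul_le_mul_of_nonneg_left hcase (by positivity)
      exact le_of_mul_le_mul_right h5 huwpos
    calc ((QN r l i N + QN s m j N).ncard : ℝ) ≤ 4 * (r:ℝ)^((1:ℝ)/2) * (s:ℝ)^((1:ℝ)/2) * (v * z) := prodbound
      _ ≤ 4 * (r:ℝ)^((1:ℝ)/2) * (s:ℝ)^((1:ℝ)/2) * (N:ℝ)^((3:ℝ)/4) :=
          mul_le_mul_of_nonneg_left hvz2 (by positivity)
      _ ≤ 8 * (r:ℝ)^((1:ℝ)/2) * (s:ℝ)^((1:ℝ)/2) * (N:ℝ)^((3:ℝ)/4) := by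
          have e0 : (0:ℝ) ≤ (r:ℝ)^((1:ℝ)/2) * (s:ℝ)^((1:ℝ)/2) * (N:ℝ)^((3:ℝ)/4) := by positivity
          nlinarith [e0]
  · -- span case : u + w ≤ uw + 1 ≤ N^(1/4) + 1 ≤ 2 N^(1/4)
    have hN14 : (1:ℝ) ≤ (N:ℝ)^((1:ℝ)/4) := Real.one_le_rpow hN1 (by norm_num)
    have huw : u + w ≤ 2 * (N:ℝ)^((1:ℝ)/4) := by nlinarith
    calc ((QN r l i N + QN s m j N).ncard : ℝ)
        ≤ (r:ℝ)^((1:ℝ)/2) * u * (N:ℝ)^((1:ℝ)/2) + (s:ℝ)^((1:ℝ)/2) * w * (N:ℝ)^((1:ℝ)/2) + 1 := spanbound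
      _ ≤ (s:ℝ)^((1:ℝ)/2) * (u + w) * (N:ℝ)^((1:ℝ)/2) + 1 := by
          have hNh : (0:ℝ) < (N:ℝ)^((1:ℝ)/2) := by positivity
          nlinarith [mul_nonneg (mul_nonneg (sub_nonneg.2 hrsr)
            (by positivity : (0:ℝ) ≤ u)) (le_of_lt hNh)]
      _ ≤ (s:ℝ)^((1:ℝ)/2) * (2 * (N:ℝ)^((1:ℝ)/4)) * (N:ℝ)^((1:ℝ)/2) + 1 := by
          gcongr
      _ = 2 * (s:ℝ)^((1:ℝ)/2) * (N:ℝ)^((3:ℝ)/4) + 1 := by rw [← hq]; ring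
      _ ≤ 8 * (r:ℝ)^((1:ℝ)/2) * (s:ℝ)^((1:ℝ)/2) * (N:ℝ)^((3:ℝ)/4) := by
          have e1 : (1:ℝ)*1 ≤ (r:ℝ)^((1:ℝ)/2) * (s:ℝ)^((1:ℝ)/2) :=
            mul_le_mul hRr hRs zero_le_one (by positivity)
          have e3 : (1:ℝ)*1 ≤ ((r:ℝ)^((1:ℝ)/2) * (s:ℝ)^((1:ℝ)/2)) * (N:ℝ)^((3:ℝ)/4) :=
            mul_le_mul (by linarith) hN34 zero_le_one (by positivity)
          have e2 : (s:ℝ)^((1:ℝ)/2) * (N:ℝ)^((3:ℝ)/4) ≤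
              (r:ℝ)^((1:ℝ)/2) * ((s:ℝ)^((1:ℝ)/2) * (N:ℝ)^((3:ℝ)/4)) :=
            le_mul_of_one_le_left (by positivity) hRr
          nlinarith [e2, e3]
def R (t l i N : ℕ) : Set ℕ := insert 0 (QN t l i N)

lemma R_finite (t l i N : ℕ) : (R t l i N).Finite := (QN_finite t l i N).insert 0

lemma ncard_R_add_R {r s : ℕ} (hr : 2 ≤ r) (hrs : r ≤ s) (l i m j N : ℕ) (hN : 1 ≤ N) :
    ((R r l i N + R s m j N).ncard : ℝ) ≤
      16 * ((r:ℝ)^((1:ℝ)/2) * (s:ℝ)^((1:ℝ)/2)) * (N:ℝ)^((3:ℝ)/4) := by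
  have hs : 2 ≤ s := le_trans hr hrs
  have hsub : R r l i N + R s m j N ⊆
      ((QN r l i N + QN s m j N) ∪ QN s m j N) ∪ (QN r l i N ∪ {0}) := by
    rintro x hx
    rw [Set.mem_add] at hx
    obtain ⟨a, ha, b, hb, rfl⟩ := hx
    rcases Set.mem_insert_iff.1 ha with rfl | ha'
    · rcases Set.mem_insert_iff.1 hb with rfl | hb'
      · right; right; rfl
      · left; right; simpa using hb'
    · rcases Set.mem_insert_iff.1 hb with rfl | hb'
      · right; left; simpa using ha'
      · left; left; exact Set.add_mem_add ha' hb'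
  have hfin : (((QN r l i N + QN s m j N) ∪ QN s m j N) ∪ (QN r l i N ∪ {0})).Finite := by
    refine (Set.Finite.union ?_ (QN_finite s m j N)).union ((QN_finite r l i N).union (Set.finite_singleton 0))
    exact ((QN_finite r l i N).add (QN_finite s m j N))
  have h1 : (R r l i N + R s m j N).ncard ≤
      (QN r l i N + QN s m j N).ncard + (QN s m j N).ncard + ((QN r l i N).ncard + 1) := by
    refine le_trans (Set.ncard_le_ncard hsub hfin) ?_
    refine le_trans (Set.ncard_union_le _ _) ?_
    have h2 := Set.ncard_union_le (QN r l i N + QN s m j N) (QN s m j N)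
    have h3 := Set.ncard_union_le (QN r l i N) ({0} : Set ℕ)
    simp only [Set.ncard_singleton] at h3
    omega
  have h1' : ((R r l i N + R s m j N).ncard : ℝ) ≤
      ((QN r l i N + QN s m j N).ncard : ℝ) + ((QN s m j N).ncard : ℝ) + (((QN r l i N).ncard : ℝ) + 1) := by
    exact_mod_cast h1
  have hN1 : (1:ℝ) ≤ (N:ℝ) := by exact_mod_cast hN
  have hpair := pair_bound hr hrs l i m j N hN
  have hA := ncard_QN_le_real hr l i N hN
  have hB := ncard_QN_le_real hs m j N hN
  have hNN : (N:ℝ)^((1:ℝ)/2) ≤ (N:ℝ)^((3:ℝ)/4) :=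
    Real.rpow_le_rpow_of_exponent_le hN1 (by norm_num)
  have hRr : (1:ℝ) ≤ (r:ℝ)^((1:ℝ)/2) :=
    Real.one_le_rpow (by exact_mod_cast (by omega : 1 ≤ r)) (by norm_num)
  have hRs : (1:ℝ) ≤ (s:ℝ)^((1:ℝ)/2) :=
    Real.one_le_rpow (by exact_mod_cast (by omega : 1 ≤ s)) (by norm_num)
  have hrsr : (r:ℝ)^((1:ℝ)/2) ≤ (s:ℝ)^((1:ℝ)/2) :=
    Real.rpow_le_rpow (by positivity) (by exact_mod_cast hrs) (by norm_num)
  have hN34 : (1:ℝ) ≤ (N:ℝ)^((3:ℝ)/4) := Real.one_le_rpow hN1 (by norm_num)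
  nlinarith [mul_le_mul hrsr hNN (by positivity) (by positivity)]

lemma mem_cover {t a N : ℕ} (ht : 2 ≤ t) (hN : 1 ≤ N) (haA : a ∈ exSet t) (haN : a < N) :
    ∃ l i, l ≤ Nat.log t N ∧ i ≤ Nat.log t N ∧ a ∈ R t l i N := by
  rw [exSet_eq] at haA
  rcases haA with rfl | haA
  · exact ⟨0, 0, Nat.zero_le _, Nat.zero_le _, Set.mem_insert _ _⟩
  · obtain ⟨l, hl⟩ := Set.mem_iUnion.1 haA
    obtain ⟨i, hq⟩ := Set.mem_iUnion.1 hl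
    have h1 : t ^ (l+i) ≤ N := le_trans (pow_le_of_mem_Q (by omega) hq) (by omega)
    have h2 : l + i ≤ Nat.log t N := by
      rw [Nat.le_log_iff_pow_le (by omega) (by omega)]
      exact h1
    exact ⟨l, i, by omega, by omega, Set.mem_insert_of_mem _ ⟨hq, haN⟩⟩

lemma count_add_upper {r s N : ℕ} (hr : 2 ≤ r) (hrs : r ≤ s) (hN : 3 ≤ N) :
    (({n ∈ exSet r + exSet s | n < N}).ncard : ℝ) ≤
      1296 * ((r:ℝ)^((1:ℝ)/2) * (s:ℝ)^((1:ℝ)/2)) * (Real.log N)^4 * (N:ℝ)^((3:ℝ)/4) := by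
  classical
  have hs : 2 ≤ s := le_trans hr hrs
  set Lr := Nat.log r N with hLr
  set Ls := Nat.log s N with hLs
  set G : Finset ((ℕ × ℕ) × (ℕ × ℕ)) :=
    (Finset.range (Lr+1) ×ˢ Finset.range (Lr+1)) ×ˢ (Finset.range (Ls+1) ×ˢ Finset.range (Ls+1)) with hG
  have cover : {n ∈ exSet r + exSet s | n < N} ⊆
      ⋃ q ∈ G, (R r q.1.1 q.1.2 N + R s q.2.1 q.2.2 N) := by
    rintro x ⟨hx, hxN⟩
    rw [Set.mem_add] at hx
    obtain ⟨a, haA, b, hbB, rfl⟩ := hx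
    have haN : a < N := by omega
    have hbN : b < N := by omega
    obtain ⟨l, i, hl, hi, haR⟩ := mem_cover hr (by omega) haA haN
    obtain ⟨m, j, hm, hj, hbR⟩ := mem_cover hs (by omega) hbB hbN
    refine Set.mem_biUnion (?_ : ((l,i),(m,j)) ∈ G) (Set.add_mem_add haR hbR)
    simp only [hG, Finset.mem_product, Finset.mem_range]
    exact ⟨⟨by omega, by omega⟩, by omega, by omega⟩
  have hfin : (⋃ q ∈ G, (R r q.1.1 q.1.2 N + R s q.2.1 q.2.2 N)).Finite := by
    refine Set.Finite.biUnion G.finite_toSet ?_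
    intro q _
    exact (R_finite _ _ _ _).add (R_finite _ _ _ _)
  have step1 : ({n ∈ exSet r + exSet s | n < N}).ncard ≤
      ∑ q ∈ G, (R r q.1.1 q.1.2 N + R s q.2.1 q.2.2 N).ncard :=
    le_trans (Set.ncard_le_ncard cover hfin) (ncard_biUnion_le G _)
  have hterm : ∀ q ∈ G, ((R r q.1.1 q.1.2 N + R s q.2.1 q.2.2 N).ncard : ℝ) ≤
      16 * ((r:ℝ)^((1:ℝ)/2) * (s:ℝ)^((1:ℝ)/2)) * (N:ℝ)^((3:ℝ)/4) := by
    intro q _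
    exact ncard_R_add_R hr hrs _ _ _ _ N (by omega)
  have step2 : ((∑ q ∈ G, (R r q.1.1 q.1.2 N + R s q.2.1 q.2.2 N).ncard : ℕ) : ℝ) ≤
      (((Lr:ℝ)+1)^2 * ((Ls:ℝ)+1)^2) * (16 * ((r:ℝ)^((1:ℝ)/2) * (s:ℝ)^((1:ℝ)/2)) * (N:ℝ)^((3:ℝ)/4)) := by
    push_cast
    refine le_trans (Finset.sum_le_sum hterm) ?_
    rw [Finset.sum_const, hG]
    simp only [Finset.card_product, Finset.card_range]
    rw [nsmul_eq_mul]
    push_cast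
    have hnn : (0:ℝ) ≤ 16 * ((r:ℝ)^((1:ℝ)/2) * (s:ℝ)^((1:ℝ)/2)) * (N:ℝ)^((3:ℝ)/4) := by positivity
    nlinarith [hnn]
  have hlogr := natlog_le hr hN
  have hlogs := natlog_le hs hN
  have h4 := log_ge_one hN
  have hbound : (((Lr:ℝ)+1)^2 * ((Ls:ℝ)+1)^2) ≤ 81 * (Real.log N)^4 := by
    have h5 : ((Lr:ℝ)+1)^2 ≤ (3*Real.log N)^2 := by
      apply pow_le_pow_left₀ (by positivity) hlogr
    have h6 : ((Ls:ℝ)+1)^2 ≤ (3*Real.log N)^2 := by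
      apply pow_le_pow_left₀ (by positivity) hlogs
    have h7 : (0:ℝ) ≤ ((Lr:ℝ)+1)^2 := by positivity
    have h8 : (0:ℝ) ≤ ((Ls:ℝ)+1)^2 := by positivity
    nlinarith
  have step1' : (({n ∈ exSet r + exSet s | n < N}).ncard : ℝ) ≤
      ((∑ q ∈ G, (R r q.1.1 q.1.2 N + R s q.2.1 q.2.2 N).ncard : ℕ) : ℝ) := by
    exact_mod_cast step1
  have hnn : (0:ℝ) ≤ 16 * ((r:ℝ)^((1:ℝ)/2) * (s:ℝ)^((1:ℝ)/2)) * (N:ℝ)^((3:ℝ)/4) := by positivity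
  nlinarith [mul_le_mul_of_nonneg_right hbound hnn]
lemma tendsto_logN : Tendsto (fun N : ℕ => Real.log N) atTop atTop :=
  Real.tendsto_log_atTop.comp tendsto_natCast_atTop_atTop

lemma tendsto_const_div_logN (c : ℝ) :
    Tendsto (fun N : ℕ => c / Real.log N) atTop (𝓝 0) :=
  Tendsto.div_atTop tendsto_const_nhds tendsto_logN

lemma tendsto_loglog :
    Tendsto (fun N : ℕ => Real.log (Real.log N) / Real.log N) atTop (𝓝 0) :=
  (Real.isLittleO_log_id_atTop.tendsto_div_nhds_zero).comp tendsto_logN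

lemma tendsto_massDim {t : ℕ} (ht : 2 ≤ t) :
    Tendsto (fun N : ℕ =>
      Real.log (({n ∈ exSet t | n < N}).ncard : ℝ) / Real.log N) atTop (𝓝 (1 / 2)) := by
  have ht1 : (1:ℝ) ≤ (t:ℝ) := by exact_mod_cast (by omega : 1 ≤ t)
  have hT : (0:ℝ) < (t:ℝ)^((1:ℝ)/2) := Real.rpow_pos_of_pos (by linarith) _
  have tg : Tendsto (fun N : ℕ => 1/2 - Real.log (2*(t:ℝ)^((1:ℝ)/2)) / Real.log N)
      atTop (𝓝 (1/2)) := by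
    simpa using (tendsto_const_div_logN (Real.log (2*(t:ℝ)^((1:ℝ)/2)))).const_sub (1/2 : ℝ)
  have th : Tendsto (fun N : ℕ => 1/2 + (Real.log (19*(t:ℝ)^((1:ℝ)/2)) / Real.log N
      + 2 * (Real.log (Real.log N) / Real.log N))) atTop (𝓝 (1/2)) := by
    simpa using ((tendsto_const_div_logN (Real.log (19*(t:ℝ)^((1:ℝ)/2)))).add
      (tendsto_loglog.const_mul (2:ℝ))).const_add (1/2 : ℝ)
  refine tendsto_of_tendsto_of_tendsto_of_le_of_le' tg th ?_ ?_
  · filter_upwards [Filter.eventually_ge_atTop (max (4*t^2) 3)] with N hN'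
    have hN3 : 3 ≤ N := le_trans (le_max_right _ _) hN'
    have hN4 : 4*t^2 ≤ N := le_trans (le_max_left _ _) hN'
    have hNpos : (0:ℝ) < (N:ℝ) := by exact_mod_cast (by omega : 0 < N)
    have hlogpos : (0:ℝ) < Real.log N := lt_of_lt_of_le one_pos (log_ge_one hN3)
    have hlow := count_lower ht hN4
    have hlowpos : (0:ℝ) < (N:ℝ)^((1:ℝ)/2) / (2*(t:ℝ)^((1:ℝ)/2)) := by
      apply div_pos (Real.rpow_pos_of_pos hNpos _) (by linarith)
    have h1 : Real.log ((N:ℝ)^((1:ℝ)/2) / (2*(t:ℝ)^((1:ℝ)/2)))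
        ≤ Real.log (({n ∈ exSet t | n < N}).ncard : ℝ) := Real.log_le_log hlowpos hlow
    have h2 : Real.log ((N:ℝ)^((1:ℝ)/2) / (2*(t:ℝ)^((1:ℝ)/2)))
        = (1/2) * Real.log N - Real.log (2*(t:ℝ)^((1:ℝ)/2)) := by
      rw [Real.log_div (by positivity) (by positivity), Real.log_rpow hNpos]
    have h3 : 1/2 - Real.log (2*(t:ℝ)^((1:ℝ)/2)) / Real.log N
        = ((1/2) * Real.log N - Real.log (2*(t:ℝ)^((1:ℝ)/2))) / Real.log N := by
      field_simp
    rw [h3, ← h2]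
    exact div_le_div_of_nonneg_right h1 hlogpos.le
  · filter_upwards [Filter.eventually_ge_atTop (max (4*t^2) 3)] with N hN'
    have hN3 : 3 ≤ N := le_trans (le_max_right _ _) hN'
    have hN4 : 4*t^2 ≤ N := le_trans (le_max_left _ _) hN'
    have hNpos : (0:ℝ) < (N:ℝ) := by exact_mod_cast (by omega : 0 < N)
    have hloggeone := log_ge_one hN3
    have hlogpos : (0:ℝ) < Real.log N := lt_of_lt_of_le one_pos hloggeone
    have hlow := count_lower ht hN4
    have hlowpos : (0:ℝ) < (N:ℝ)^((1:ℝ)/2) / (2*(t:ℝ)^((1:ℝ)/2)) := by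
      apply div_pos (Real.rpow_pos_of_pos hNpos _) (by linarith)
    have hcntpos : (0:ℝ) < (({n ∈ exSet t | n < N}).ncard : ℝ) := lt_of_lt_of_le hlowpos hlow
    have hup := count_upper ht hN3
    have h1 : Real.log (({n ∈ exSet t | n < N}).ncard : ℝ)
        ≤ Real.log (19 * (t:ℝ)^((1:ℝ)/2) * (Real.log N)^2 * (N:ℝ)^((1:ℝ)/2)) :=
      Real.log_le_log hcntpos hup
    have h2 : Real.log (19 * (t:ℝ)^((1:ℝ)/2) * (Real.log N)^2 * (N:ℝ)^((1:ℝ)/2))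
        = Real.log (19*(t:ℝ)^((1:ℝ)/2)) + 2 * Real.log (Real.log N) + (1/2) * Real.log N := by
      rw [Real.log_mul (by positivity) (by positivity),
        Real.log_mul (by positivity) (by positivity),
        Real.log_pow, Real.log_rpow hNpos]
      push_cast
      ring
    have h3 : 1/2 + (Real.log (19*(t:ℝ)^((1:ℝ)/2)) / Real.log N
        + 2 * (Real.log (Real.log N) / Real.log N))
        = (Real.log (19*(t:ℝ)^((1:ℝ)/2)) + 2 * Real.log (Real.log N)
          + (1/2) * Real.log N) / Real.log N := by
      field_simp
      ring
    rw [h3, ← h2]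
    exact div_le_div_of_nonneg_right h1 hlogpos.le

lemma upperMassDim_add_le {r s : ℕ} (hr : 2 ≤ r) (hrs : r ≤ s) :
    upperMassDim (exSet r + exSet s) ≤ 3/4 := by
  have hs : 2 ≤ s := le_trans hr hrs
  have hrpos : (0:ℝ) < (r:ℝ)^((1:ℝ)/2) :=
    Real.rpow_pos_of_pos (by exact_mod_cast (by omega : 0 < r)) _
  have hspos : (0:ℝ) < (s:ℝ)^((1:ℝ)/2) :=
    Real.rpow_pos_of_pos (by exact_mod_cast (by omega : 0 < s)) _
  set C : ℝ := 1296 * ((r:ℝ)^((1:ℝ)/2) * (s:ℝ)^((1:ℝ)/2)) with hCdef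
  have hC : (0:ℝ) < C := by rw [hCdef]; positivity
  have th : Tendsto (fun N : ℕ => 3/4 + (Real.log C / Real.log N
      + 4 * (Real.log (Real.log N) / Real.log N))) atTop (𝓝 (3/4)) := by
    simpa using ((tendsto_const_div_logN (Real.log C)).add
      (tendsto_loglog.const_mul (4:ℝ))).const_add (3/4 : ℝ)
  have hcnt1 : ∀ N : ℕ, 1 ≤ N → 1 ≤ ({n ∈ exSet r + exSet s | n < N}).ncard := by
    intro N hN
    have h0 : (0:ℕ) ∈ {n ∈ exSet r + exSet s | n < N} := by
      refine ⟨?_, by omega⟩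
      have h00 := Set.add_mem_add (s := exSet r) (t := exSet s) (zero_mem r) (zero_mem s)
      rwa [add_zero] at h00
    have hfin : ({n ∈ exSet r + exSet s | n < N}).Finite :=
      Set.Finite.subset (Set.finite_Iio N) (by rintro n ⟨-, hn⟩; exact hn)
    have := Set.ncard_le_ncard (Set.singleton_subset_iff.2 h0) hfin
    simpa using this
  have hfh : (fun N : ℕ => Real.log (({n ∈ exSet r + exSet s | n < N}).ncard : ℝ) / Real.log N)
      ≤ᶠ[atTop] (fun N : ℕ => 3/4 + (Real.log C / Real.log N
        + 4 * (Real.log (Real.log N) / Real.log N))) := by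
    filter_upwards [Filter.eventually_ge_atTop 3] with N hN3
    have hNpos : (0:ℝ) < (N:ℝ) := by exact_mod_cast (by omega : 0 < N)
    have hloggeone := log_ge_one hN3
    have hlogpos : (0:ℝ) < Real.log N := lt_of_lt_of_le one_pos hloggeone
    have hcntpos : (0:ℝ) < (({n ∈ exSet r + exSet s | n < N}).ncard : ℝ) := by
      have h5 := hcnt1 N (by omega)
      have h6 : (1:ℝ) ≤ (({n ∈ exSet r + exSet s | n < N}).ncard : ℝ) := by exact_mod_cast h5
      linarith
    have hup := count_add_upper hr hrs hN3
    have h1 : Real.log (({n ∈ exSet r + exSet s | n < N}).ncard : ℝ)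
        ≤ Real.log (C * (Real.log N)^4 * (N:ℝ)^((3:ℝ)/4)) :=
      Real.log_le_log hcntpos (by rw [hCdef]; exact hup)
    have h2 : Real.log (C * (Real.log N)^4 * (N:ℝ)^((3:ℝ)/4))
        = Real.log C + 4 * Real.log (Real.log N) + (3/4) * Real.log N := by
      rw [Real.log_mul (by positivity) (by positivity),
        Real.log_mul (by positivity) (by positivity),
        Real.log_pow, Real.log_rpow hNpos]
      push_cast
      ring
    have h3 : 3/4 + (Real.log C / Real.log N + 4 * (Real.log (Real.log N) / Real.log N))
        = (Real.log C + 4 * Real.log (Real.log N) + (3/4) * Real.log N) / Real.log N := by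
      field_simp
      ring
    rw [h3, ← h2]
    exact div_le_div_of_nonneg_right h1 hlogpos.le
  have hcob : Filter.IsCoboundedUnder (· ≤ ·) atTop
      (fun N : ℕ => Real.log (({n ∈ exSet r + exSet s | n < N}).ncard : ℝ) / Real.log N) := by
    refine Filter.IsBoundedUnder.isCoboundedUnder_le ⟨0, ?_⟩
    rw [Filter.eventually_map]
    filter_upwards [Filter.eventually_ge_atTop 3] with N hN3
    have hloggeone := log_ge_one hN3
    have hlogpos : (0:ℝ) < Real.log N := lt_of_lt_of_le one_pos hloggeone
    have hcntge : (1:ℝ) ≤ (({n ∈ exSet r + exSet s | n < N}).ncard : ℝ) := by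
      exact_mod_cast hcnt1 N (by omega)
    have hlognn : (0:ℝ) ≤ Real.log (({n ∈ exSet r + exSet s | n < N}).ncard : ℝ) :=
      Real.log_nonneg hcntge
    exact div_nonneg hlognn hlogpos.le
  calc upperMassDim (exSet r + exSet s)
      ≤ limsup (fun N : ℕ => 3/4 + (Real.log C / Real.log N
        + 4 * (Real.log (Real.log N) / Real.log N))) atTop :=
        Filter.limsup_le_limsup hfh hcob th.isBoundedUnder_le
    _ = 3/4 := th.limsup_eq

end Ex19

/-- For `2 ≤ r < s`, the sets `A = exSet r` and `B = exSet s` have mass dimension `1/2`,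
satisfy `rA ⊆ A`, `sB ⊆ B`, `Φ_r(A) = A`, `Φ_s(B) = B`, and yet
`upper-dim_M(A+B) ≤ 4/5 < min(dim_M A + dim_M B, 1)`. -/
theorem stmt19 (r s : ℕ) (hr : 2 ≤ r) (hrs : r < s) :
    Tendsto (fun N : ℕ =>
        Real.log (({n ∈ exSet r | n < N}).ncard : ℝ) / Real.log N) atTop (𝓝 (1 / 2)) ∧
    Tendsto (fun N : ℕ =>
        Real.log (({n ∈ exSet s | n < N}).ncard : ℝ) / Real.log N) atTop (𝓝 (1 / 2)) ∧
    (∀ n ∈ exSet r, r * n ∈ exSet r) ∧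
    (∀ n ∈ exSet s, s * n ∈ exSet s) ∧
    (fun n : ℕ => n / r) '' exSet r = exSet r ∧
    (fun n : ℕ => n / s) '' exSet s = exSet s ∧
    upperMassDim (exSet r + exSet s) ≤ 4 / 5 ∧
    upperMassDim (exSet r + exSet s) < min ((1 : ℝ) / 2 + 1 / 2) 1 := by
  have hs : 2 ≤ s := by omega
  have h34 := Ex19.upperMassDim_add_le hr (by omega : r ≤ s)
  refine ⟨Ex19.tendsto_massDim hr, Ex19.tendsto_massDim hs, Ex19.mul_mem r, Ex19.mul_mem s,
    Ex19.phi_image hr, Ex19.phi_image hs, by linarith, ?_⟩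
  have : min ((1:ℝ)/2 + 1/2) 1 = 1 := by norm_num
  rw [this]
  linarith
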